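/- Let N ≥ 1, let Δ = diag(δ₁,…,δ_N) with δᵢ > 0 for all i, let x ∈ ℝᴺ, and let y ∈ ℝᴺ with yᵢ ≥ 0 for all i. Then the matrix A = −Δ + x yᵀ is diagonally stable if and only if ∑_{i=1}^{N} (1/δᵢ)·[xᵢ yᵢ]₊ < 1. -/

import Mathlib

open Matrix

/-- A real square matrix `A` is *diagonally stable* if there exists a diagonal matrix `D`
with positive diagonal entries such that `Aᵀ D + D A` is negative definite. -/
def DiagonallyStable {n : Type*} [Fintype n] [DecidableEq n] (A : Matrix n n ℝ) : Prop :=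
  ∃ d : n → ℝ, (∀ i, 0 < d i) ∧
    (-(Aᵀ * Matrix.diagonal d + Matrix.diagonal d * A)).PosDef

section Aux

open Finset

private lemma entryM (N : ℕ) (δ d x y : Fin N → ℝ) :
    ∀ i j, (-((-(Matrix.diagonal δ) + Matrix.vecMulVec x y)ᵀ * Matrix.diagonal d
        + Matrix.diagonal d * (-(Matrix.diagonal δ) + Matrix.vecMulVec x y))) i j
      = (if i = j then 2 * (δ i * d i) else 0) - (y i * (d j * x j) + d i * (x i * y j)) := by
  intro i j
  simp [Matrix.mul_diagonal, Matrix.diagonal_mul, Matrix.transpose_apply,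
    Matrix.diagonal_apply, vecMulVec_apply, Matrix.add_apply, Matrix.neg_apply]
  by_cases h : i = j <;> simp [h] <;> ring

private lemma hermM (N : ℕ) (δ d x y : Fin N → ℝ) :
    (-((-(Matrix.diagonal δ) + Matrix.vecMulVec x y)ᵀ * Matrix.diagonal d
        + Matrix.diagonal d * (-(Matrix.diagonal δ) + Matrix.vecMulVec x y))).IsHermitian := by
  unfold Matrix.IsHermitian
  ext i j
  rw [Matrix.conjTranspose_apply, entryM, entryM]
  rw [star_trivial]
  by_cases h : i = j
  · subst h; ring
  · rw [if_neg h, if_neg (fun hji => h hji.symm)]; ring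

private lemma quadform (N : ℕ) (δ d x y v : Fin N → ℝ) :
    v ⬝ᵥ ((-((-(Matrix.diagonal δ) + Matrix.vecMulVec x y)ᵀ * Matrix.diagonal d
        + Matrix.diagonal d * (-(Matrix.diagonal δ) + Matrix.vecMulVec x y))) *ᵥ v)
      = 2 * ∑ i, (δ i * d i) * v i ^ 2
        - 2 * (∑ i, y i * v i) * (∑ i, d i * x i * v i) := by
  have hM := entryM N δ d x y
  have key : ∀ i, (((-((-(Matrix.diagonal δ) + Matrix.vecMulVec x y)ᵀ * Matrix.diagonal d
        + Matrix.diagonal d * (-(Matrix.diagonal δ) + Matrix.vecMulVec x y))) *ᵥ v) i)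
      = 2 * (δ i * d i) * v i - ((∑ j, y i * (d j * x j) * v j) + ∑ j, d i * (x i * y j) * v j) := by
    intro i
    show (∑ j, _ * v j) = _
    calc ∑ j, (-((-(Matrix.diagonal δ) + Matrix.vecMulVec x y)ᵀ * Matrix.diagonal d
        + Matrix.diagonal d * (-(Matrix.diagonal δ) + Matrix.vecMulVec x y))) i j * v j
        = ∑ j, ((if i = j then 2 * (δ i * d i) * v j else 0)
            - (y i * (d j * x j) * v j + d i * (x i * y j) * v j)) := by
          refine Finset.sum_congr rfl fun j _ => ?_
          rw [hM]
          by_cases h : i = j <;> simp [h] <;> ring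
      _ = 2 * (δ i * d i) * v i - ((∑ j, y i * (d j * x j) * v j) + ∑ j, d i * (x i * y j) * v j) := by
          rw [Finset.sum_sub_distrib, Finset.sum_add_distrib, Finset.sum_ite_eq]
          simp
  show ∑ i, v i * _ = _
  calc ∑ i, v i * (((-((-(Matrix.diagonal δ) + Matrix.vecMulVec x y)ᵀ * Matrix.diagonal d
        + Matrix.diagonal d * (-(Matrix.diagonal δ) + Matrix.vecMulVec x y))) *ᵥ v) i)
      = ∑ i, (2 * ((δ i * d i) * v i ^ 2)
          - ((y i * v i) * (∑ j, d j * x j * v j) + (d i * x i * v i) * (∑ j, y j * v j))) := by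
        refine Finset.sum_congr rfl fun i _ => ?_
        rw [key i]
        rw [mul_sub, mul_add, Finset.mul_sum, Finset.mul_sum, Finset.mul_sum, Finset.mul_sum]
        congr 1
        · ring
        congr 1
        · exact Finset.sum_congr rfl fun j _ => by ring
        · exact Finset.sum_congr rfl fun j _ => by ring
    _ = 2 * ∑ i, (δ i * d i) * v i ^ 2
        - 2 * (∑ i, y i * v i) * (∑ i, d i * x i * v i) := by
        rw [Finset.sum_sub_distrib, Finset.sum_add_distrib, ← Finset.mul_sum,
          ← Finset.sum_mul, ← Finset.sum_mul]
        ring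

/-- Key Cauchy–Schwarz-type bound: `2⟨a,w⟩⟨b,w⟩ ≤ (⟨a,b⟩ + ‖a‖‖b‖)‖w‖²`. -/
private lemma keyCS (N : ℕ) (a b w : Fin N → ℝ) :
    2 * ((∑ i, a i * w i) * (∑ i, b i * w i))
      ≤ ((∑ i, a i * b i) + Real.sqrt (∑ i, a i ^ 2) * Real.sqrt (∑ i, b i ^ 2))
          * (∑ i, w i ^ 2) := by
  have hA2nn : (0:ℝ) ≤ ∑ i, a i ^ 2 := Finset.sum_nonneg fun i _ => sq_nonneg _
  have hB2nn : (0:ℝ) ≤ ∑ i, b i ^ 2 := Finset.sum_nonneg fun i _ => sq_nonneg _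
  have hWnn : (0:ℝ) ≤ ∑ i, w i ^ 2 := Finset.sum_nonneg fun i _ => sq_nonneg _
  rcases eq_or_lt_of_le hA2nn with h0 | hApos
  · have ha : ∀ i, a i = 0 := by
      intro i
      have := (Finset.sum_eq_zero_iff_of_nonneg (fun i _ => sq_nonneg (a i))).1 h0.symm i
        (Finset.mem_univ i)
      exact pow_eq_zero_iff (two_ne_zero) |>.1 this
    simp [ha]
  rcases eq_or_lt_of_le hB2nn with h0 | hBpos
  · have hb : ∀ i, b i = 0 := by
      intro i
      have := (Finset.sum_eq_zero_iff_of_nonneg (fun i _ => sq_nonneg (b i))).1 h0.symm i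
        (Finset.mem_univ i)
      exact pow_eq_zero_iff (two_ne_zero) |>.1 this
    simp [hb]
  set A2 := ∑ i, a i ^ 2 with hA2def
  set B2 := ∑ i, b i ^ 2 with hB2def
  set sA := Real.sqrt A2 with hsAdef
  set sB := Real.sqrt B2 with hsBdef
  have hsA : 0 < sA := Real.sqrt_pos.2 hApos
  have hsB : 0 < sB := Real.sqrt_pos.2 hBpos
  have hsA2 : sA ^ 2 = A2 := Real.sq_sqrt hA2nn
  have hsB2 : sB ^ 2 = B2 := Real.sq_sqrt hB2nn
  set r := Real.sqrt (sB / sA) with hrdef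
  have hr : 0 < r := Real.sqrt_pos.2 (div_pos hsB hsA)
  have hr2 : r ^ 2 = sB / sA := Real.sq_sqrt (le_of_lt (div_pos hsB hsA))
  have hsum : ∑ i, (r * a i + b i / r) ^ 2
      = r ^ 2 * A2 + 2 * (∑ i, a i * b i) + (1 / r ^ 2) * B2 := by
    have hterm : ∀ i, (r * a i + b i / r) ^ 2
        = r ^ 2 * a i ^ 2 + 2 * (a i * b i) + (1 / r ^ 2) * b i ^ 2 := by
      intro i; field_simp; ring
    rw [Finset.sum_congr rfl fun i _ => hterm i, Finset.sum_add_distrib,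
      Finset.sum_add_distrib, ← Finset.mul_sum, ← Finset.mul_sum, ← Finset.mul_sum]
  have hval1 : r ^ 2 * A2 = sA * sB := by
    rw [hr2, ← hsA2]; field_simp
  have hval2 : (1 / r ^ 2) * B2 = sA * sB := by
    rw [hr2, ← hsB2]; field_simp
  have hsplit : ∑ i, (r * a i + b i / r) * w i
      = r * (∑ i, a i * w i) + (1 / r) * (∑ i, b i * w i) := by
    rw [Finset.mul_sum, Finset.mul_sum, ← Finset.sum_add_distrib]
    exact Finset.sum_congr rfl fun i _ => by ring
  have hCS := Finset.sum_mul_sq_le_sq_mul_sq Finset.univ (fun i => r * a i + b i / r) w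
  rw [hsplit, hsum, hval1, hval2] at hCS
  set u := ∑ i, a i * w i
  set t := ∑ i, b i * w i
  set P := ∑ i, a i * b i
  set W := ∑ i, w i ^ 2
  have hrr : r * (1 / r) = 1 := by field_simp
  have h4 : 4 * (u * t) = 4 * ((r * u) * ((1 / r) * t)) := by
    field_simp
  nlinarith [sq_nonneg (r * u - (1 / r) * t), hCS]

/-- If `⟨a,w⟩⟨b,w⟩ < ‖w‖²` for all nonzero `w`, then `⟨a,b⟩ + ‖a‖‖b‖ < 2`. -/
private lemma keyMax (N : ℕ) (a b : Fin N → ℝ)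
    (h : ∀ w : Fin N → ℝ, w ≠ 0 → (∑ i, a i * w i) * (∑ i, b i * w i) < ∑ i, w i ^ 2) :
    (∑ i, a i * b i) + Real.sqrt (∑ i, a i ^ 2) * Real.sqrt (∑ i, b i ^ 2) < 2 := by
  have hA2nn : (0:ℝ) ≤ ∑ i, a i ^ 2 := Finset.sum_nonneg fun i _ => sq_nonneg _
  have hB2nn : (0:ℝ) ≤ ∑ i, b i ^ 2 := Finset.sum_nonneg fun i _ => sq_nonneg _
  rcases eq_or_lt_of_le hA2nn with h0 | hApos
  · have ha : ∀ i, a i = 0 := by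
      intro i
      have := (Finset.sum_eq_zero_iff_of_nonneg (fun i _ => sq_nonneg (a i))).1 h0.symm i
        (Finset.mem_univ i)
      exact pow_eq_zero_iff (two_ne_zero) |>.1 this
    simp [ha]
  rcases eq_or_lt_of_le hB2nn with h0 | hBpos
  · have hb : ∀ i, b i = 0 := by
      intro i
      have := (Finset.sum_eq_zero_iff_of_nonneg (fun i _ => sq_nonneg (b i))).1 h0.symm i
        (Finset.mem_univ i)
      exact pow_eq_zero_iff (two_ne_zero) |>.1 this
    simp [hb]
  set A2 := ∑ i, a i ^ 2 with hA2def
  set B2 := ∑ i, b i ^ 2 with hB2def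
  set P := ∑ i, a i * b i with hPdef
  set sA := Real.sqrt A2 with hsAdef
  set sB := Real.sqrt B2 with hsBdef
  have hsA : 0 < sA := Real.sqrt_pos.2 hApos
  have hsB : 0 < sB := Real.sqrt_pos.2 hBpos
  have hsA2 : sA ^ 2 = A2 := Real.sq_sqrt hA2nn
  have hsB2 : sB ^ 2 = B2 := Real.sq_sqrt hB2nn
  set K := P + sA * sB with hKdef
  rcases le_or_gt K 0 with hK | hK
  · linarith
  -- test vector
  set w : Fin N → ℝ := fun i => a i * (1 / sA) + b i * (1 / sB) with hwdef
  have hsAne : sA ≠ 0 := hsA.ne'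
  have hsBne : sB ≠ 0 := hsB.ne'
  have hsumw : ∑ i, w i ^ 2 = 2 * K / (sA * sB) := by
    have hterm : ∀ i, w i ^ 2
        = a i ^ 2 * (1 / sA ^ 2) + (a i * b i) * (2 / (sA * sB)) + b i ^ 2 * (1 / sB ^ 2) := by
      intro i
      show (a i * (1 / sA) + b i * (1 / sB)) ^ 2 = _
      field_simp
      ring
    rw [Finset.sum_congr rfl fun i _ => hterm i, Finset.sum_add_distrib,
      Finset.sum_add_distrib, ← Finset.sum_mul, ← Finset.sum_mul, ← Finset.sum_mul,
      ← hA2def, ← hB2def, ← hPdef, hKdef, ← hsA2, ← hsB2]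
    field_simp
    ring
  have haw : ∑ i, a i * w i = K / sB := by
    have hterm : ∀ i, a i * w i = a i ^ 2 * (1 / sA) + (a i * b i) * (1 / sB) := by
      intro i
      show a i * (a i * (1 / sA) + b i * (1 / sB)) = _
      ring
    rw [Finset.sum_congr rfl fun i _ => hterm i, Finset.sum_add_distrib,
      ← Finset.sum_mul, ← Finset.sum_mul, ← hA2def, ← hPdef, hKdef, ← hsA2]
    field_simp
    ring
  have hbw : ∑ i, b i * w i = K / sA := by
    have hterm : ∀ i, b i * w i = (a i * b i) * (1 / sA) + b i ^ 2 * (1 / sB) := by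
      intro i
      show b i * (a i * (1 / sA) + b i * (1 / sB)) = _
      ring
    rw [Finset.sum_congr rfl fun i _ => hterm i, Finset.sum_add_distrib,
      ← Finset.sum_mul, ← Finset.sum_mul, ← hB2def, ← hPdef, hKdef, ← hsB2]
    field_simp
  have hwne : w ≠ 0 := by
    intro hw0
    have h2K : 2 * K / (sA * sB) = 0 := by
      rw [← hsumw, hw0]
      simp
    rcases div_eq_zero_iff.1 h2K with h | h
    · linarith
    · nlinarith [mul_pos hsA hsB]
  have hlt := h w hwne
  rw [haw, hbw, hsumw] at hlt
  have hK2 : K ^ 2 < 2 * K := by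
    have e1 : K / sB * (K / sA) * (sA * sB) = K ^ 2 := by field_simp
    have e2 : 2 * K / (sA * sB) * (sA * sB) = 2 * K := by field_simp
    have := mul_lt_mul_of_pos_right hlt (mul_pos hsA hsB)
    rw [e1, e2] at this
    exact this
  nlinarith

end Aux

set_option maxHeartbeats 1600000 in
/-- `A = -Δ + x yᵀ` with `Δ = diag(δ)`, `δᵢ > 0`, `yᵢ ≥ 0`, is diagonally stable
iff `∑ᵢ (1/δᵢ)[xᵢ yᵢ]₊ < 1`. -/
theorem rank1_diagonal_stability (N : ℕ) (hN : 1 ≤ N) (δ x y : Fin N → ℝ)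
    (hδ : ∀ i, 0 < δ i) (hy : ∀ i, 0 ≤ y i) :
    DiagonallyStable (-(Matrix.diagonal δ) + Matrix.vecMulVec x y) ↔
      ∑ i, (1 / δ i) * max (x i * y i) 0 < 1 := by
  -- reformulate the RHS
  have habs : ∀ i, 2 * ((1 / δ i) * max (x i * y i) 0)
      = x i * y i / δ i + |x i * y i| / δ i := by
    intro i
    rcases le_total (x i * y i) 0 with h | h
    · rw [max_eq_right h, abs_of_nonpos h]; ring
    · rw [max_eq_left h, abs_of_nonneg h]; ring
  have hiff : (∑ i, (1 / δ i) * max (x i * y i) 0 < 1)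
      ↔ ((∑ i, x i * y i / δ i) + ∑ i, |x i * y i| / δ i < 2) := by
    rw [← Finset.sum_add_distrib]
    rw [show (∑ i, (x i * y i / δ i + |x i * y i| / δ i))
        = 2 * ∑ i, (1 / δ i) * max (x i * y i) 0 by
      rw [Finset.mul_sum]; exact Finset.sum_congr rfl fun i _ => (habs i).symm]
    constructor <;> intro h <;> linarith
  rw [hiff]
  constructor
  · rintro ⟨d, hd, hherm, hpos⟩
    have hc : ∀ i, 0 < δ i * d i := fun i => mul_pos (hδ i) (hd i)
    set s : Fin N → ℝ := fun i => Real.sqrt (δ i * d i) with hsdef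
    have hs : ∀ i, 0 < s i := fun i => Real.sqrt_pos.2 (hc i)
    have hs2 : ∀ i, s i ^ 2 = δ i * d i := fun i => Real.sq_sqrt (hc i).le
    set a : Fin N → ℝ := fun i => y i / s i with hadef
    set b : Fin N → ℝ := fun i => d i * x i / s i with hbdef
    have hmain : ∀ w : Fin N → ℝ, w ≠ 0 →
        (∑ i, a i * w i) * (∑ i, b i * w i) < ∑ i, w i ^ 2 := by
      intro w hw
      set v : Fin N → ℝ := fun i => w i / s i with hvdef
      have hv : v ≠ 0 := by
        intro hv0
        apply hw
        funext i
        have h0 : w i / s i = 0 := congrFun hv0 i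
        rcases div_eq_zero_iff.1 h0 with h | h
        · exact h
        · exact absurd h (ne_of_gt (hs i))
      have hq := (posDef_iff_dotProduct_mulVec.mp ⟨hherm, hpos⟩).2 hv
      rw [star_trivial, quadform] at hq
      have e1 : ∑ i, (δ i * d i) * v i ^ 2 = ∑ i, w i ^ 2 := by
        refine Finset.sum_congr rfl fun i _ => ?_
        show (δ i * d i) * (w i / s i) ^ 2 = w i ^ 2
        rw [div_pow, ← hs2 i]
        have := (hs i).ne'
        field_simp
      have e2 : ∑ i, y i * v i = ∑ i, a i * w i := by
        refine Finset.sum_congr rfl fun i _ => ?_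
        show y i * (w i / s i) = (y i / s i) * w i
        ring
      have e3 : ∑ i, d i * x i * v i = ∑ i, b i * w i := by
        refine Finset.sum_congr rfl fun i _ => ?_
        show d i * x i * (w i / s i) = (d i * x i / s i) * w i
        ring
      rw [e1, e2, e3] at hq
      nlinarith [hq]
    have hkm := keyMax N a b hmain
    have hP : ∑ i, a i * b i = ∑ i, x i * y i / δ i := by
      refine Finset.sum_congr rfl fun i _ => ?_
      show (y i / s i) * (d i * x i / s i) = x i * y i / δ i
      rw [div_mul_div_comm]
      have hss : s i * s i = δ i * d i := by
        have := hs2 i; nlinarith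
      rw [hss, div_eq_div_iff (hc i).ne' (hδ i).ne']
      ring
    have hS : ∑ i, |x i * y i| / δ i ≤ Real.sqrt (∑ i, a i ^ 2) * Real.sqrt (∑ i, b i ^ 2) := by
      have e4 : ∑ i, |x i * y i| / δ i = ∑ i, |a i| * |b i| := by
        refine Finset.sum_congr rfl fun i _ => ?_
        show |x i * y i| / δ i = |y i / s i| * |d i * x i / s i|
        have hss : s i * s i = δ i * d i := by
          have := hs2 i; nlinarith
        rw [← abs_mul, div_mul_div_comm, hss, abs_div, abs_of_pos (hc i),
          div_eq_div_iff (hδ i).ne' (hc i).ne']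
        have h1 : |y i * (d i * x i)| = y i * d i * |x i| := by
          rw [abs_mul, abs_mul, abs_of_nonneg (hy i), abs_of_pos (hd i)]
          ring
        have h2 : |x i * y i| = |x i| * y i := by
          rw [abs_mul, abs_of_nonneg (hy i)]
        rw [h1, h2]
        ring
      rw [e4]
      calc ∑ i, |a i| * |b i|
          ≤ Real.sqrt (∑ i, |a i| ^ 2) * Real.sqrt (∑ i, |b i| ^ 2) :=
            Real.sum_mul_le_sqrt_mul_sqrt _ _ _
        _ = Real.sqrt (∑ i, a i ^ 2) * Real.sqrt (∑ i, b i ^ 2) := by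
            simp [sq_abs]
    rw [hP] at hkm
    linarith
  · intro hlt
    set P0 := ∑ i, x i * y i / δ i with hP0
    set S := ∑ i, |x i * y i| / δ i with hSdef
    have hSnn : 0 ≤ S := by
      rw [hSdef]
      exact Finset.sum_nonneg fun i _ => div_nonneg (abs_nonneg _) (hδ i).le
    set C1 := ∑ i, y i / δ i with hC1
    set C2 := ∑ i, |x i| / δ i with hC2
    have hC1nn : 0 ≤ C1 := by
      rw [hC1]
      exact Finset.sum_nonneg fun i _ => div_nonneg (hy i) (hδ i).le
    have hC2nn : 0 ≤ C2 := by
      rw [hC2]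
      exact Finset.sum_nonneg fun i _ => div_nonneg (abs_nonneg _) (hδ i).le
    have hγpos : 0 < 2 - (P0 + S) := by linarith
    set ε := (2 - (P0 + S)) / (2 * (C1 + C2 + 1)) with hε
    have hden2 : (0:ℝ) < 2 * (C1 + C2 + 1) := by nlinarith
    have hεpos : 0 < ε := by rw [hε]; exact div_pos hγpos hden2
    have hεC : ε * (C1 + C2) < 2 - (P0 + S) := by
      rw [hε, div_mul_eq_mul_div, div_lt_iff₀ hden2]
      nlinarith
    set d : Fin N → ℝ := fun i => (y i + ε) / (|x i| + ε) with hddef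
    have hd : ∀ i, 0 < d i := by
      intro i
      have h1 := hy i
      have h2 := abs_nonneg (x i)
      show 0 < (y i + ε) / (|x i| + ε)
      exact div_pos (by linarith) (by linarith)
    refine ⟨d, hd, posDef_iff_dotProduct_mulVec.mpr ⟨hermM N δ d x y, ?_⟩⟩
    intro v hv
    rw [star_trivial, quadform]
    have hc : ∀ i, 0 < δ i * d i := fun i => mul_pos (hδ i) (hd i)
    set s : Fin N → ℝ := fun i => Real.sqrt (δ i * d i) with hsdef
    have hs : ∀ i, 0 < s i := fun i => Real.sqrt_pos.2 (hc i)
    have hs2 : ∀ i, s i ^ 2 = δ i * d i := fun i => Real.sq_sqrt (hc i).le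
    have hss : ∀ i, s i * s i = δ i * d i := by
      intro i; have := hs2 i; nlinarith
    set a : Fin N → ℝ := fun i => y i / s i with hadef
    set b : Fin N → ℝ := fun i => d i * x i / s i with hbdef
    set w : Fin N → ℝ := fun i => s i * v i with hwdef
    have hcs := keyCS N a b w
    have e1 : ∑ i, a i * w i = ∑ i, y i * v i := by
      refine Finset.sum_congr rfl fun i _ => ?_
      show (y i / s i) * (s i * v i) = y i * v i
      have := (hs i).ne'
      field_simp
    have e2 : ∑ i, b i * w i = ∑ i, d i * x i * v i := by
      refine Finset.sum_congr rfl fun i _ => ?_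
      show (d i * x i / s i) * (s i * v i) = d i * x i * v i
      have := (hs i).ne'
      field_simp
    have e3 : ∑ i, w i ^ 2 = ∑ i, (δ i * d i) * v i ^ 2 := by
      refine Finset.sum_congr rfl fun i _ => ?_
      show (s i * v i) ^ 2 = (δ i * d i) * v i ^ 2
      rw [mul_pow, hs2 i]
    have eP : ∑ i, a i * b i = P0 := by
      rw [hP0]
      refine Finset.sum_congr rfl fun i _ => ?_
      show (y i / s i) * (d i * x i / s i) = x i * y i / δ i
      rw [div_mul_div_comm, hss i, div_eq_div_iff (hc i).ne' (hδ i).ne']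
      ring
    -- norm bounds
    have hYbound : ∑ i, a i ^ 2 ≤ S + ε * C1 := by
      have hterm : ∀ i, a i ^ 2 ≤ |x i * y i| / δ i + ε * (y i / δ i) := by
        intro i
        show (y i / s i) ^ 2 ≤ _
        rw [div_pow, hs2 i]
        have hxy : |x i * y i| = |x i| * y i := by
          rw [abs_mul, abs_of_nonneg (hy i)]
        rw [hxy]
        have hyi := hy i
        have hδi := hδ i
        have hxa := abs_nonneg (x i)
        have hnum : (0:ℝ) < y i + ε := by linarith
        have hden : (0:ℝ) < |x i| + ε := by linarith
        have hdd : y i ^ 2 / (δ i * d i) = y i ^ 2 * (|x i| + ε) / (δ i * (y i + ε)) := by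
          have hdd2 : d i = (y i + ε) / (|x i| + ε) := rfl
          rw [hdd2]
          field_simp
        rw [hdd]
        calc y i ^ 2 * (|x i| + ε) / (δ i * (y i + ε))
            ≤ (|x i| * y i + ε * y i) / δ i := by
              rw [div_le_div_iff₀ (mul_pos hδi hnum) hδi]
              nlinarith [mul_nonneg (mul_nonneg hδi.le (add_nonneg hxa hεpos.le))
                (mul_nonneg hyi hεpos.le)]
          _ = |x i| * y i / δ i + ε * (y i / δ i) := by ring
      calc ∑ i, a i ^ 2 ≤ ∑ i, (|x i * y i| / δ i + ε * (y i / δ i)) :=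
            Finset.sum_le_sum fun i _ => hterm i
        _ = S + ε * C1 := by
            rw [Finset.sum_add_distrib, ← Finset.mul_sum, ← hSdef, ← hC1]
    have hBbound : ∑ i, b i ^ 2 ≤ S + ε * C2 := by
      have hterm : ∀ i, b i ^ 2 ≤ |x i * y i| / δ i + ε * (|x i| / δ i) := by
        intro i
        show (d i * x i / s i) ^ 2 ≤ _
        rw [div_pow, hs2 i]
        have hxy : |x i * y i| = |x i| * y i := by
          rw [abs_mul, abs_of_nonneg (hy i)]
        rw [hxy]
        have hyi := hy i
        have hδi := hδ i
        have hxa := abs_nonneg (x i)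
        have hdi := hd i
        have hnum : (0:ℝ) < y i + ε := by linarith
        have hden : (0:ℝ) < |x i| + ε := by linarith
        have hdd : (d i * x i) ^ 2 / (δ i * d i) = x i ^ 2 * (y i + ε) / (δ i * (|x i| + ε)) := by
          have hdd2 : d i = (y i + ε) / (|x i| + ε) := rfl
          rw [hdd2]
          field_simp
        rw [hdd]
        calc x i ^ 2 * (y i + ε) / (δ i * (|x i| + ε))
            ≤ (|x i| * y i + ε * |x i|) / δ i := by
              rw [div_le_div_iff₀ (mul_pos hδi hden) hδi]
              have hx2 : x i ^ 2 = |x i| * |x i| := by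
                rw [pow_two, ← abs_mul_abs_self]
              rw [hx2]
              nlinarith [mul_nonneg (mul_nonneg (mul_nonneg hεpos.le hδi.le) hxa) hnum.le]
          _ = |x i| * y i / δ i + ε * (|x i| / δ i) := by ring
      calc ∑ i, b i ^ 2 ≤ ∑ i, (|x i * y i| / δ i + ε * (|x i| / δ i)) :=
            Finset.sum_le_sum fun i _ => hterm i
        _ = S + ε * C2 := by
            rw [Finset.sum_add_distrib, ← Finset.mul_sum, ← hSdef, ← hC2]
    have hsqrt : Real.sqrt (∑ i, a i ^ 2) * Real.sqrt (∑ i, b i ^ 2)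
        ≤ S + ε * (C1 + C2) := by
      have hT : (0:ℝ) ≤ S + ε * (C1 + C2) := by
        nlinarith [mul_nonneg hεpos.le (add_nonneg hC1nn hC2nn)]
      have h1 : Real.sqrt (∑ i, a i ^ 2) ≤ Real.sqrt (S + ε * (C1 + C2)) :=
        Real.sqrt_le_sqrt (by nlinarith [mul_nonneg hεpos.le hC2nn])
      have h2 : Real.sqrt (∑ i, b i ^ 2) ≤ Real.sqrt (S + ε * (C1 + C2)) :=
        Real.sqrt_le_sqrt (by nlinarith [mul_nonneg hεpos.le hC1nn])
      calc Real.sqrt (∑ i, a i ^ 2) * Real.sqrt (∑ i, b i ^ 2)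
          ≤ Real.sqrt (S + ε * (C1 + C2)) * Real.sqrt (S + ε * (C1 + C2)) :=
            mul_le_mul h1 h2 (Real.sqrt_nonneg _) (Real.sqrt_nonneg _)
        _ = S + ε * (C1 + C2) := Real.mul_self_sqrt hT
    have hvpos : 0 < ∑ i, (δ i * d i) * v i ^ 2 := by
      obtain ⟨i, hi⟩ := Function.ne_iff.1 hv
      refine Finset.sum_pos' (fun j _ => mul_nonneg (hc j).le (sq_nonneg _))
        ⟨i, Finset.mem_univ i, ?_⟩
      have hvi : (0:ℝ) < v i ^ 2 :=
        lt_of_le_of_ne (sq_nonneg _) (Ne.symm (pow_ne_zero 2 hi))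
      exact mul_pos (hc i) hvi
    rw [e1, e2, e3, eP] at hcs
    have hsqnn : 0 ≤ Real.sqrt (∑ i, a i ^ 2) * Real.sqrt (∑ i, b i ^ 2) :=
      mul_nonneg (Real.sqrt_nonneg _) (Real.sqrt_nonneg _)
    have hKlt : P0 + Real.sqrt (∑ i, a i ^ 2) * Real.sqrt (∑ i, b i ^ 2) < 2 := by
      linarith [hsqrt, hεC]
    nlinarith [hcs, hKlt, hvpos,
      mul_lt_mul_of_pos_right hKlt hvpos]
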